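/- If for each element e the local integrals satisfy ∫_{Ω^e} N̂^e_a N^e_b dΩ = ω^e_a δ_{ab} (with ω^e_a the element weights), and for each global function index A the weights over the elements in its support sum to one, Σ_{e : Ω^e ⊆ Ω^A} ω^e_{a(e,A)} = 1, then the globally assembled pairing satisfies ∫_Ω N̂_A N_B dΩ = δ_{AB}. -/

import Mathlib

open MeasureTheory

/-- if on each element `Ω^e` the local pairing is
`∫_{Ω^e} N̂_A N_B = ω^e_A δ_{AB}` when `e` supports `A` (and `0` otherwise, since
`N̂_A` vanishes off its support and distinct global functions are locally
biorthogonal), and for each global index `A` the weights over the elements in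
its support sum to one, then the assembled global pairing satisfies
`∫_Ω N̂_A N_B = δ_{AB}`. -/
theorem assembled_biorthogonality
    {Ω : Type*} [MeasurableSpace Ω] (μ : Measure Ω) (m n : ℕ)
    (elem : Fin m → Set Ω)
    (hMeas : ∀ e, MeasurableSet (elem e))
    (hDisj : Pairwise (Function.onFun Disjoint elem))
    (hCover : (⋃ e, elem e) = Set.univ)
    (N Nhat : Fin n → Ω → ℝ)
    (supp : Fin n → Finset (Fin m))
    (ω : Fin m → Fin n → ℝ)
    (hInt : ∀ A B, Integrable (fun x => Nhat A x * N B x) μ)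
    (hLocal : ∀ e A B, ∫ x in elem e, Nhat A x * N B x ∂μ =
        if A = B ∧ e ∈ supp A then ω e A else 0)
    (hWeights : ∀ A, ∑ e ∈ supp A, ω e A = 1) :
    ∀ A B, ∫ x, Nhat A x * N B x ∂μ = if A = B then (1:ℝ) else 0 := by
  intro A B
  have h1 : ∫ x, Nhat A x * N B x ∂μ = ∫ x in ⋃ e, elem e, Nhat A x * N B x ∂μ := by
    rw [hCover, Measure.restrict_univ]
  rw [h1, integral_iUnion_fintype hMeas hDisj (fun e => (hInt A B).integrableOn)]
  simp only [hLocal]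
  by_cases h : A = B
  · subst h
    simp only [true_and]
    rw [Finset.sum_ite_mem, Finset.univ_inter, hWeights]; simp
  · simp [h]
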